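/- Let ≺ be an almost total ordering of I which is measurable as a subset of I², and define f(u) := Leb({v ∈ I : v ≺ u}). Then for every t ∈ [0,1] the level set C_t := {u ∈ I : f(u) = t} has Lebesgue measure zero. -/

import Mathlib

open MeasureTheory

/-- `R` (as a binary relation `u ≺ v ⟺ (u,v) ∈ R`) is an almost total ordering of
`I = [0,1]`: completeness, antisymmetry and (pairwise/triplewise) transitivity hold
outside null sets. -/
def IsAlmostTotalOrder (R : Set (ℝ × ℝ)) : Prop :=
  volume {p : ℝ × ℝ | p.1 ∈ Set.Icc (0:ℝ) 1 ∧ p.2 ∈ Set.Icc (0:ℝ) 1 ∧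
      p ∉ R ∧ (p.2, p.1) ∉ R} = 0 ∧
  volume {p : ℝ × ℝ | p.1 ∈ Set.Icc (0:ℝ) 1 ∧ p.2 ∈ Set.Icc (0:ℝ) 1 ∧
      p ∈ R ∧ (p.2, p.1) ∈ R} = 0 ∧
  volume {q : ℝ × ℝ × ℝ | q.1 ∈ Set.Icc (0:ℝ) 1 ∧ q.2.1 ∈ Set.Icc (0:ℝ) 1 ∧
      q.2.2 ∈ Set.Icc (0:ℝ) 1 ∧
      (q.1, q.2.1) ∈ R ∧ (q.2.1, q.2.2) ∈ R ∧ (q.1, q.2.2) ∉ R} = 0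

/-- `f(u) = Leb({v ∈ I : v ≺ u})`, the measure of the lower section at `u`. -/
noncomputable def ordf (R : Set (ℝ × ℝ)) (u : ℝ) : ℝ :=
  (volume {v : ℝ | v ∈ Set.Icc (0:ℝ) 1 ∧ (v, u) ∈ R}).toReal

/-- For a measurable almost total ordering `≺` of `I` and
`f(u) := Leb({v ∈ I : v ≺ u})`, every level set `C_t = {u ∈ I : f(u) = t}`,
`t ∈ [0,1]`, has Lebesgue measure zero. -/
theorem level_sets_null (R : Set (ℝ × ℝ)) (hR : MeasurableSet R)
    (hato : IsAlmostTotalOrder R) :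
    ∀ t ∈ Set.Icc (0:ℝ) 1,
      volume {u : ℝ | u ∈ Set.Icc (0:ℝ) 1 ∧ ordf R u = t} = 0 := by
  obtain ⟨hcomp, hanti, htrans⟩ := hato
  intro t ht
  by_contra hc
  set L : ℝ → Set ℝ := fun u => {v : ℝ | v ∈ Set.Icc (0:ℝ) 1 ∧ (v, u) ∈ R} with hLdef
  set C : Set ℝ := {u : ℝ | u ∈ Set.Icc (0:ℝ) 1 ∧ ordf R u = t} with hCdef
  -- basic measurability
  have hLmeas : ∀ u, MeasurableSet (L u) := fun u =>
    measurableSet_Icc.inter ((measurable_id.prodMk measurable_const) hR)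
  have hfmeas : Measurable (ordf R) := by
    have hS0 : MeasurableSet {p : ℝ × ℝ | p.2 ∈ Set.Icc (0:ℝ) 1 ∧ (p.2, p.1) ∈ R} :=
      (measurable_snd measurableSet_Icc).inter ((measurable_snd.prodMk measurable_fst) hR)
    exact (measurable_measure_prodMk_left (ν := volume) hS0).ennreal_toReal
  have hCmeas : MeasurableSet C := by
    have : C = Set.Icc (0:ℝ) 1 ∩ (ordf R) ⁻¹' {t} := by
      ext u; simp [hCdef, Set.mem_setOf_eq]
    rw [this]
    exact measurableSet_Icc.inter (hfmeas (measurableSet_singleton t))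
  have hCsub : C ⊆ Set.Icc (0:ℝ) 1 := fun u hu => hu.1
  -- the sections have measure `t`
  have hLfin : ∀ u, volume (L u) ≠ ⊤ := by
    intro u
    refine ne_top_of_le_ne_top ?_ (measure_mono (fun v hv => hv.1))
    simp [Real.volume_Icc]
  have hLvol : ∀ u ∈ C, volume (L u) = ENNReal.ofReal t := by
    intro u hu
    have h2 : (volume (L u)).toReal = t := hu.2
    rw [← h2, ENNReal.ofReal_toReal (hLfin u)]
  -- symmetry of null differences, given equal finite measures
  have hdiff : ∀ u ∈ C, ∀ v ∈ C, volume (L u \ L v) = 0 → volume (L v \ L u) = 0 := by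
    intro u hu v hv h
    have e1 : volume (L u ∩ L v) + volume (L u \ L v) = volume (L u) :=
      measure_inter_add_diff _ (hLmeas v)
    rw [h, add_zero, hLvol u hu] at e1
    have e2 : volume (L v ∩ L u) + volume (L v \ L u) = volume (L v) :=
      measure_inter_add_diff _ (hLmeas u)
    rw [Set.inter_comm, e1, hLvol v hv] at e2
    nth_rewrite 2 [← add_zero (ENNReal.ofReal t)] at e2
    exact (ENNReal.add_right_inj ENNReal.ofReal_ne_top).mp e2
  -- completeness and antisymmetry restricted to `C`
  have hcompC : volume {p : ℝ × ℝ | p.1 ∈ C ∧ p.2 ∈ C ∧ p ∉ R ∧ (p.2, p.1) ∉ R} = 0 := by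
    refine measure_mono_null (fun p hp => ?_) hcomp
    exact ⟨hCsub hp.1, hCsub hp.2.1, hp.2.2⟩
  have hantiC : volume {p : ℝ × ℝ | p.1 ∈ C ∧ p.2 ∈ C ∧ p ∈ R ∧ (p.2, p.1) ∈ R} = 0 := by
    refine measure_mono_null (fun p hp => ?_) hanti
    exact ⟨hCsub hp.1, hCsub hp.2.1, hp.2.2⟩
  -- transitivity: slicing the triple null set by its last two coordinates
  set T : Set (ℝ × ℝ × ℝ) := {q : ℝ × ℝ × ℝ | q.1 ∈ Set.Icc (0:ℝ) 1 ∧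
      q.2.1 ∈ Set.Icc (0:ℝ) 1 ∧ q.2.2 ∈ Set.Icc (0:ℝ) 1 ∧
      (q.1, q.2.1) ∈ R ∧ (q.2.1, q.2.2) ∈ R ∧ (q.1, q.2.2) ∉ R} with hTdef
  have hTmeas : MeasurableSet T :=
    (measurable_fst measurableSet_Icc).inter
      ((measurable_snd.fst measurableSet_Icc).inter
        ((measurable_snd.snd measurableSet_Icc).inter
          (((measurable_fst.prodMk measurable_snd.fst) hR).inter
            (((measurable_snd.fst.prodMk measurable_snd.snd) hR).inter
              (((measurable_fst.prodMk measurable_snd.snd) hR).compl)))))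
  have hswapQMP : Measure.QuasiMeasurePreserving
      (Prod.swap : (ℝ × ℝ) × ℝ → ℝ × (ℝ × ℝ)) volume volume := by
    rw [Measure.volume_eq_prod, Measure.volume_eq_prod]
    exact Measure.measurePreserving_swap.quasiMeasurePreserving
  have hT'null : volume (Prod.swap ⁻¹' T : Set ((ℝ × ℝ) × ℝ)) = 0 :=
    hswapQMP.preimage_null htrans
  have hsec : ∀ᵐ p : ℝ × ℝ, volume {a : ℝ | (a, p.1, p.2) ∈ T} = 0 := by
    have hU : MeasurableSet (Prod.swap ⁻¹' T : Set ((ℝ × ℝ) × ℝ)) := measurable_swap hTmeas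
    rw [Measure.volume_eq_prod] at hT'null
    have h := (Measure.measure_prod_null hU).mp hT'null
    filter_upwards [h] with p hp
    have : Prod.mk p ⁻¹' (Prod.swap ⁻¹' T : Set ((ℝ × ℝ) × ℝ)) = {a : ℝ | (a, p.1, p.2) ∈ T} := by
      ext a; rfl
    rw [← this]
    exact hp
  have hA : ∀ᵐ p : ℝ × ℝ, p.1 ∈ C → p.2 ∈ C → p ∈ R → volume (L p.1 \ L p.2) = 0 := by
    filter_upwards [hsec] with p hp h1 h2 h3
    have heq : L p.1 \ L p.2 = {a : ℝ | (a, p.1, p.2) ∈ T} := by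
      ext a
      simp only [hTdef, hLdef, Set.mem_diff, Set.mem_setOf_eq]
      constructor
      · rintro ⟨⟨ha, haR⟩, hnot⟩
        exact ⟨ha, hCsub h1, hCsub h2, haR, h3, fun hc' => hnot ⟨ha, hc'⟩⟩
      · rintro ⟨ha, -, -, haR, -, hnot⟩
        exact ⟨⟨ha, haR⟩, fun hc' => hnot hc'.2⟩
    rw [heq]
    exact hp
  have hswap2 : Measure.QuasiMeasurePreserving (Prod.swap : ℝ × ℝ → ℝ × ℝ) volume volume := by
    rw [Measure.volume_eq_prod]
    exact Measure.measurePreserving_swap.quasiMeasurePreserving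
  have hAswap : ∀ᵐ p : ℝ × ℝ, p.2 ∈ C → p.1 ∈ C → (p.2, p.1) ∈ R →
      volume (L p.2 \ L p.1) = 0 := hswap2.ae hA
  have hcompAE : ∀ᵐ p : ℝ × ℝ, ¬(p.1 ∈ C ∧ p.2 ∈ C ∧ p ∉ R ∧ (p.2, p.1) ∉ R) :=
    measure_eq_zero_iff_ae_notMem.mp hcompC
  have hG : ∀ᵐ p : ℝ × ℝ, p.1 ∈ C → p.2 ∈ C →
      (volume (L p.1 \ L p.2) = 0 ∧ volume (L p.2 \ L p.1) = 0) := by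
    filter_upwards [hA, hAswap, hcompAE] with p h1 h2 h3 hu hv
    by_cases hr : p ∈ R
    · have d1 := h1 hu hv hr
      exact ⟨d1, hdiff _ hu _ hv d1⟩
    · have hr2 : (p.2, p.1) ∈ R := by
        by_contra hr2
        exact h3 ⟨hu, hv, hr, hr2⟩
      have d2 := h2 hv hu hr2
      exact ⟨hdiff _ hv _ hu d2, d2⟩
  have hG2 : ∀ᵐ u : ℝ, ∀ᵐ v : ℝ, (u ∈ C → v ∈ C →
      (volume (L u \ L v) = 0 ∧ volume (L v \ L u) = 0)) := by
    rw [Measure.volume_eq_prod] at hG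
    exact Measure.ae_ae_of_ae_prod hG
  -- pick a generic `u₀ ∈ C`
  obtain ⟨u₀, hu₀C, hQ⟩ : ∃ u₀ ∈ C, ∀ᵐ v : ℝ, (u₀ ∈ C → v ∈ C →
      (volume (L u₀ \ L v) = 0 ∧ volume (L v \ L u₀) = 0)) := by
    by_contra h
    push_neg at h
    refine hc (measure_mono_null (fun u hu => ?_) (ae_iff.mp hG2))
    exact Filter.not_eventually.mpr ((h u hu).mono fun v hv => by tauto)
  have hQ' : ∀ᵐ v : ℝ, v ∈ C → (volume (L u₀ \ L v) = 0 ∧ volume (L v \ L u₀) = 0) := by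
    filter_upwards [hQ] with v hv using fun h => hv hu₀C h
  -- two bad product sets are null
  set B1 : Set (ℝ × ℝ) := {p : ℝ × ℝ | p.1 ∈ C ∧ (p.2 ∈ C ∧ p.2 ∈ L u₀) ∧ (p.2, p.1) ∉ R}
    with hB1def
  have hB1meas : MeasurableSet B1 :=
    (measurable_fst hCmeas).inter
      (((measurable_snd hCmeas).inter (measurable_snd (hLmeas u₀))).inter
        (((measurable_snd.prodMk measurable_fst) hR).compl))
  have hB1null : volume B1 = 0 := by
    rw [Measure.volume_eq_prod, Measure.measure_prod_null hB1meas]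
    filter_upwards [hQ'] with v hv
    show volume (Prod.mk v ⁻¹' B1) = 0
    by_cases hvC : v ∈ C
    · refine measure_mono_null (fun a ha => ?_) (hv hvC).1
      obtain ⟨-, ⟨-, h3⟩, h4⟩ := ha
      exact ⟨h3, fun hc' => h4 hc'.2⟩
    · have hemp : Prod.mk v ⁻¹' B1 = ∅ := by
        ext a
        simp only [Set.mem_preimage, Set.mem_empty_iff_false, iff_false]
        exact fun hmem => hvC hmem.1
      rw [hemp]
      simp
  set B2 : Set (ℝ × ℝ) := {p : ℝ × ℝ | p.1 ∈ C ∧ (p.2 ∈ C ∧ p.2 ∉ L u₀) ∧ (p.2, p.1) ∈ R}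
    with hB2def
  have hB2meas : MeasurableSet B2 :=
    (measurable_fst hCmeas).inter
      (((measurable_snd hCmeas).inter (measurable_snd (hLmeas u₀)).compl).inter
        ((measurable_snd.prodMk measurable_fst) hR))
  have hB2null : volume B2 = 0 := by
    rw [Measure.volume_eq_prod, Measure.measure_prod_null hB2meas]
    filter_upwards [hQ'] with v hv
    show volume (Prod.mk v ⁻¹' B2) = 0
    by_cases hvC : v ∈ C
    · refine measure_mono_null (fun a ha => ?_) (hv hvC).2
      obtain ⟨-, ⟨h2, h3⟩, h4⟩ := ha
      exact ⟨⟨hCsub h2, h4⟩, h3⟩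
    · have hemp : Prod.mk v ⁻¹' B2 = ∅ := by
        ext a
        simp only [Set.mem_preimage, Set.mem_empty_iff_false, iff_false]
        exact fun hmem => hvC hmem.1
      rw [hemp]
      simp
  have hB1snull : volume (Prod.swap ⁻¹' B1) = 0 := hswap2.preimage_null hB1null
  have hB2snull : volume (Prod.swap ⁻¹' B2) = 0 := hswap2.preimage_null hB2null
  -- `C ∩ L u₀` is null (antisymmetry would fail on it)
  have hKnull : volume (C ∩ L u₀) = 0 := by
    have hsub : (C ∩ L u₀) ×ˢ (C ∩ L u₀) ⊆ (B1 ∪ Prod.swap ⁻¹' B1) ∪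
        {p : ℝ × ℝ | p.1 ∈ C ∧ p.2 ∈ C ∧ p ∈ R ∧ (p.2, p.1) ∈ R} := by
      rintro ⟨v, a⟩ ⟨⟨hvC, hvΛ⟩, haC, haΛ⟩
      by_cases h1 : (a, v) ∈ R
      · by_cases h2 : (v, a) ∈ R
        · exact Or.inr ⟨hvC, haC, h2, h1⟩
        · exact Or.inl (Or.inr ⟨haC, ⟨hvC, hvΛ⟩, h2⟩)
      · exact Or.inl (Or.inl ⟨hvC, ⟨haC, haΛ⟩, h1⟩)
    have h0 : volume ((C ∩ L u₀) ×ˢ (C ∩ L u₀)) = 0 :=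
      measure_mono_null hsub
        (measure_union_null (measure_union_null hB1null hB1snull) hantiC)
    rw [Measure.volume_eq_prod, Measure.prod_prod] at h0
    exact mul_self_eq_zero.mp h0
  -- `C \ L u₀` is null (completeness would fail on it)
  have hK'null : volume (C \ L u₀) = 0 := by
    have hsub : (C \ L u₀) ×ˢ (C \ L u₀) ⊆ (B2 ∪ Prod.swap ⁻¹' B2) ∪
        {p : ℝ × ℝ | p.1 ∈ C ∧ p.2 ∈ C ∧ p ∉ R ∧ (p.2, p.1) ∉ R} := by
      rintro ⟨v, a⟩ ⟨⟨hvC, hvΛ⟩, haC, haΛ⟩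
      by_cases h1 : (a, v) ∈ R
      · exact Or.inl (Or.inl ⟨hvC, ⟨haC, haΛ⟩, h1⟩)
      · by_cases h2 : (v, a) ∈ R
        · exact Or.inl (Or.inr ⟨haC, ⟨hvC, hvΛ⟩, h2⟩)
        · exact Or.inr ⟨hvC, haC, h2, h1⟩
    have h0 : volume ((C \ L u₀) ×ˢ (C \ L u₀)) = 0 :=
      measure_mono_null hsub
        (measure_union_null (measure_union_null hB2null hB2snull) hcompC)
    rw [Measure.volume_eq_prod, Measure.prod_prod] at h0
    exact mul_self_eq_zero.mp h0
  refine hc ?_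
  have hsubC : C ⊆ (C ∩ L u₀) ∪ (C \ L u₀) := by
    intro u hu
    by_cases h : u ∈ L u₀
    · exact Or.inl ⟨hu, h⟩
    · exact Or.inr ⟨hu, h⟩
  exact measure_mono_null hsubC (measure_union_null hKnull hK'null)
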